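/- Let p ∈ [0,1], δ > 0, and let f : ℝ^n → ℝ be convex, differentiable, and (L,p)-Hölder smooth. Let L_δ > 0 be any constant with L_δ ≥ ((1−p)/((1+p)δ))^{(1−p)/(1+p)} · L^{2/(1+p)}, with the convention that the first factor equals 1 when p = 1. Then for all x, y ∈ ℝ^n, f(y) ≥ f(x) + ⟨∇f(x), y − x⟩ + (1/(2L_δ))‖∇f(x) − ∇f(y)‖² − δ/2. -/

import Mathlib

open scoped RealInnerProductSpace

variable {E : Type*} [NormedAddCommGroup E] [InnerProductSpace ℝ E] [CompleteSpace E]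

lemma myLineDeriv (a v : E) (t : ℝ) : HasDerivAt (fun s : ℝ => a + s • v) v t := by
  simpa using ((hasDerivAt_id t).smul_const v).const_add a

lemma myCompDeriv {f : E → ℝ} {g : E} {z : E} (h : HasGradientAt f g z) (a v : E) (t : ℝ)
    (hz : z = a + t • v) :
    HasDerivAt (fun s : ℝ => f (a + s • v)) ⟪g, v⟫ t := by
  subst hz
  have h1 := (hasGradientAt_iff_hasFDerivAt.1 h).comp_hasDerivAt t (myLineDeriv a v t)
  have h2 : HasDerivAt (f ∘ fun s : ℝ => a + s • v) ⟪g, v⟫ t := by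
    simpa [InnerProductSpace.toDual_apply_apply] using h1
  exact h2

/-- first-order convexity bound -/
lemma convex_lb {f : E → ℝ} {f' : E → E} (hconv : ConvexOn ℝ Set.univ f)
    (hdiff : ∀ x, HasGradientAt f (f' x) x) (a b : E) :
    f a + ⟪f' a, b - a⟫ ≤ f b := by
  have hg : ConvexOn ℝ Set.univ (fun t : ℝ => f (a + t • (b - a))) := by
    have h := hconv.comp_affineMap (AffineMap.lineMap a b)
    simp only [Set.preimage_univ] at h
    have e : (fun t : ℝ => f (a + t • (b - a))) = f ∘ (AffineMap.lineMap a b) := by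
      funext t
      simp only [Function.comp_apply, AffineMap.lineMap_apply_module]
      congr 1
      module
    rw [e]; exact h
  have hd : HasDerivAt (fun t : ℝ => f (a + t • (b - a))) ⟪f' a, b - a⟫ 0 :=
    myCompDeriv (hdiff a) a (b - a) 0 (by simp)
  have h2 := hg.le_slope_of_hasDerivAt (Set.mem_univ (0:ℝ)) (Set.mem_univ (1:ℝ)) one_pos hd
  simp [slope_def_field] at h2
  linarith

/-- descent lemma for Hölder smooth functions -/
lemma descent_lemma {L q : ℝ} (hL : 0 ≤ L) (hq0 : 0 ≤ q) (hq1 : q ≤ 1)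
    {f : E → ℝ} {f' : E → E}
    (hdiff : ∀ x, HasGradientAt f (f' x) x)
    (hHolder : ∀ x y, ‖f' x - f' y‖ ≤ L * ‖x - y‖ ^ q) (a b : E) :
    f b ≤ f a + ⟪f' a, b - a⟫ + L / (1 + q) * ‖b - a‖ ^ (1 + q) := by
  have hcf : Continuous f := continuous_iff_continuousAt.2 fun x => (hdiff x).differentiableAt.continuousAt
  by_cases hv : b - a = 0
  · have hba : b = a := by rwa [sub_eq_zero] at hv
    subst hba
    simp [Real.zero_rpow (by positivity : (1:ℝ) + q ≠ 0)]
  set v := b - a with hvdef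
  set G : ℝ → ℝ := fun t => f (a + t • v) - t * ⟪f' a, v⟫ - L / (1 + q) * t ^ (1 + q) * ‖v‖ ^ (1 + q) with hG
  have hcont : ContinuousOn G (Set.Icc 0 1) := by
    apply Continuous.continuousOn
    have h1 : Continuous fun t : ℝ => t ^ (1 + q) := by
      rw [continuous_iff_continuousAt]
      intro t
      exact Real.continuousAt_rpow_const t (1 + q) (Or.inr (by positivity))
    fun_prop
  have hderiv : ∀ t ∈ Set.Ioo (0:ℝ) 1, HasDerivAt G
      (⟪f' (a + t • v), v⟫ - ⟪f' a, v⟫ - L / (1 + q) * ((1 + q) * t ^ ((1 + q) - 1)) * ‖v‖ ^ (1 + q)) t := by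
    intro t ht
    have h1 : HasDerivAt (fun s : ℝ => f (a + s • v)) ⟪f' (a + t • v), v⟫ t :=
      myCompDeriv (hdiff (a + t • v)) a v t rfl
    have h2 : HasDerivAt (fun s : ℝ => s ^ (1 + q)) ((1 + q) * t ^ ((1 + q) - 1)) t :=
      Real.hasDerivAt_rpow_const (Or.inl (ne_of_gt ht.1))
    have h3 := ((h1.sub ((hasDerivAt_id t).mul_const ⟪f' a, v⟫)).sub
      (((h2.const_mul (L / (1 + q)))).mul_const (‖v‖ ^ (1 + q))))
    simp only [one_mul] at h3
    exact h3
  have hDnonpos : ∀ t ∈ Set.Ioo (0:ℝ) 1,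
      ⟪f' (a + t • v), v⟫ - ⟪f' a, v⟫ - L / (1 + q) * ((1 + q) * t ^ ((1 + q) - 1)) * ‖v‖ ^ (1 + q) ≤ 0 := by
    intro t ht
    have hq' : (1 : ℝ) + q ≠ 0 := by positivity
    have e1 : L / (1 + q) * ((1 + q) * t ^ ((1 + q) - 1)) = L * t ^ q := by
      field_simp
      ring_nf
    rw [e1]
    have h4 : ⟪f' (a + t • v), v⟫ - ⟪f' a, v⟫ = ⟪f' (a + t • v) - f' a, v⟫ := by
      rw [inner_sub_left]
    rw [h4]
    have h5 : ⟪f' (a + t • v) - f' a, v⟫ ≤ ‖f' (a + t • v) - f' a‖ * ‖v‖ :=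
      real_inner_le_norm _ _
    have h6 : ‖f' (a + t • v) - f' a‖ ≤ L * ‖t • v‖ ^ q := by
      have := hHolder (a + t • v) a
      simpa using this
    have h7 : ‖t • v‖ ^ q = t ^ q * ‖v‖ ^ q := by
      rw [norm_smul, Real.norm_eq_abs, abs_of_pos ht.1, Real.mul_rpow (le_of_lt ht.1) (norm_nonneg v)]
    have h8 : ‖v‖ ^ q * ‖v‖ = ‖v‖ ^ (q + 1) := by
      rw [Real.rpow_add_one (norm_ne_zero_iff.2 hv)]
    have h9 : L * ‖t • v‖ ^ q * ‖v‖ = L * t ^ q * ‖v‖ ^ (q + 1) := by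
      rw [h7, ← h8]; ring
    have h10 : ⟪f' (a + t • v) - f' a, v⟫ ≤ L * t ^ q * ‖v‖ ^ (1 + q) := by
      calc ⟪f' (a + t • v) - f' a, v⟫ ≤ ‖f' (a + t • v) - f' a‖ * ‖v‖ := h5
        _ ≤ L * ‖t • v‖ ^ q * ‖v‖ := by
            apply mul_le_mul_of_nonneg_right h6 (norm_nonneg v)
        _ = L * t ^ q * ‖v‖ ^ (1 + q) := by rw [h9, add_comm]
    nlinarith [Real.rpow_nonneg (norm_nonneg v) (1 + q), Real.rpow_nonneg (le_of_lt ht.1) q]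
  have hanti : AntitoneOn G (Set.Icc 0 1) := by
    apply AntitoneOn.mono (antitoneOn_of_deriv_nonpos (convex_Icc 0 1) hcont ?_ ?_) (le_refl _)
    · intro t ht
      rw [interior_Icc] at ht
      exact ((hderiv t ht).differentiableAt).differentiableWithinAt
    · intro t ht
      rw [interior_Icc] at ht
      rw [(hderiv t ht).deriv]
      exact hDnonpos t ht
  have hG10 := hanti (Set.mem_Icc.2 ⟨le_refl 0, zero_le_one⟩) (Set.mem_Icc.2 ⟨zero_le_one, le_refl 1⟩) zero_le_one
  have e0 : G 0 = f a := by
    simp [hG, Real.zero_rpow (by positivity : (1:ℝ) + q ≠ 0)]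
  have e1 : G 1 = f b - ⟪f' a, v⟫ - L / (1 + q) * ‖v‖ ^ (1 + q) := by
    have hb : a + (1:ℝ) • v = b := by rw [one_smul, hvdef]; abel
    rw [hG]
    simp only [Real.one_rpow, one_smul, one_mul]
    rw [show a + v = b by rw [hvdef]; abel, mul_one]
  rw [e0, e1] at hG10
  linarith

/-- scalar inequality -/
lemma scalarC {L p δ Lδ : ℝ} (hL : 0 ≤ L) (hp0 : 0 ≤ p) (hp1 : p ≤ 1) (hδ : 0 < δ)
    (hLδpos : 0 < Lδ)
    (hLδ : ((1 - p) / ((1 + p) * δ)) ^ ((1 - p) / (1 + p)) * L ^ (2 / (1 + p)) ≤ Lδ)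
    (t : ℝ) (ht : 0 ≤ t) :
    L / (1 + p) * t ^ (1 + p) ≤ Lδ / 2 * t ^ 2 + δ / 2 := by
  have hq1 : (0:ℝ) < 1 + p := by linarith
  rcases eq_or_lt_of_le hp1 with hp | hp
  · -- p = 1
    subst hp
    have h1 : ((1 - 1) / ((1 + 1) * δ) : ℝ) ^ ((1 - 1) / (1 + 1) : ℝ) = 1 := by
      norm_num
    have h2 : L ^ ((2:ℝ) / (1 + 1)) = L := by
      norm_num
    rw [h1, h2, one_mul] at hLδ
    have h3 : t ^ ((1:ℝ) + 1) = t ^ 2 := by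
      rw [show (1:ℝ) + 1 = ((2:ℕ):ℝ) by norm_num, Real.rpow_natCast]
    rw [h3]
    nlinarith [sq_nonneg t]
  · -- p < 1
    set q1 := 1 + p with hq1def
    set q2 := 1 - p with hq2def
    have hq2 : (0:ℝ) < q2 := by simp [hq2def]; linarith
    have hq1ne : q1 ≠ 0 := ne_of_gt hq1
    have hq2ne : q2 ≠ 0 := ne_of_gt hq2
    -- conjugate exponents
    have hconj : Real.HolderConjugate (2 / q1) (2 / q2) := by
      rw [Real.holderConjugate_iff]
      constructor
      · rw [lt_div_iff₀ hq1]; simp [hq1def]; linarith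
      · field_simp
        rw [hq1def, hq2def]; ring
    set A : ℝ := (Lδ / q1) ^ (q1 / 2) with hA
    have hApos : 0 < A := Real.rpow_pos_of_pos (div_pos hLδpos hq1) _
    set a : ℝ := A * t ^ q1 with ha
    set b : ℝ := L / (q1 * A) with hb
    have ha0 : 0 ≤ a := mul_nonneg (le_of_lt hApos) (Real.rpow_nonneg ht _)
    have hb0 : 0 ≤ b := div_nonneg hL (by positivity)
    have hyoung := Real.young_inequality_of_nonneg ha0 hb0 hconj
    -- a * b = L / q1 * t ^ q1
    have hab : a * b = L / q1 * t ^ q1 := by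
      rw [ha, hb]
      field_simp
    -- a ^ (2/q1) / (2/q1) = Lδ / 2 * t ^ 2
    have haQ : a ^ (2 / q1) / (2 / q1) = Lδ / 2 * t ^ 2 := by
      rw [ha, Real.mul_rpow (le_of_lt hApos) (Real.rpow_nonneg ht _)]
      rw [hA, ← Real.rpow_natCast t 2, ← Real.rpow_mul (le_of_lt (div_pos hLδpos hq1)),
        ← Real.rpow_mul ht]
      rw [show q1 / 2 * (2 / q1) = 1 by field_simp, show q1 * (2 / q1) = (2:ℝ) by field_simp]
      rw [Real.rpow_one]
      field_simp
      norm_num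
    -- key: from hLδ
    have hC0 : (0:ℝ) ≤ q2 / (q1 * δ) := by positivity
    have hKey : q2 / (q1 * δ) * L ^ (2 / q2) ≤ Lδ ^ (q1 / q2) := by
      have hLHS0 : 0 ≤ (q2 / (q1 * δ)) ^ (q2 / q1) * L ^ (2 / q1) :=
        mul_nonneg (Real.rpow_nonneg hC0 _) (Real.rpow_nonneg hL _)
      have h5 := Real.rpow_le_rpow hLHS0 hLδ (by positivity : (0:ℝ) ≤ q1 / q2)
      rw [Real.mul_rpow (Real.rpow_nonneg hC0 _) (Real.rpow_nonneg hL _),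
        ← Real.rpow_mul hC0, ← Real.rpow_mul hL,
        show q2 / q1 * (q1 / q2) = 1 by field_simp,
        show 2 / q1 * (q1 / q2) = 2 / q2 by rw [div_mul_div_comm, mul_comm q1 q2, mul_div_mul_right _ _ hq1ne],
        Real.rpow_one] at h5
      exact h5
    -- b ^ (2/q2) / (2/q2) ≤ δ / 2
    have hbQ : b ^ (2 / q2) / (2 / q2) ≤ δ / 2 := by
      have hbs : b ^ (2 / q2) = L ^ (2 / q2) / (q1 * Lδ ^ (q1 / q2)) := by
        rw [hb, Real.div_rpow hL (by positivity)]
        congr 1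
        rw [Real.mul_rpow (le_of_lt hq1) (le_of_lt hApos)]
        rw [hA, ← Real.rpow_mul (le_of_lt (div_pos hLδpos hq1)),
          show q1 / 2 * (2 / q2) = q1 / q2 by rw [div_mul_div_comm, mul_comm q1 2, mul_div_mul_left _ _ (by norm_num : (2:ℝ) ≠ 0)],
          Real.div_rpow (le_of_lt hLδpos) (le_of_lt hq1)]
        have hq1pow : q1 ^ (2 / q2) = q1 * q1 ^ (q1 / q2) := by
          rw [show 2 / q2 = 1 + q1 / q2 by rw [eq_comm, add_comm]; rw [div_add' _ _ _ hq2ne]; congr 1; rw [hq1def, hq2def]; ring,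
            Real.rpow_add hq1, Real.rpow_one]
        rw [hq1pow]
        have hne : q1 ^ (q1 / q2) ≠ 0 := ne_of_gt (Real.rpow_pos_of_pos hq1 _)
        field_simp
      rw [hbs]
      rw [div_div_eq_mul_div, div_le_iff₀ (by norm_num : (0:ℝ) < 2)]
      rw [div_mul_eq_mul_div, div_le_iff₀ (by positivity : (0:ℝ) < q1 * Lδ ^ (q1 / q2))]
      have h6 := mul_le_mul_of_nonneg_left hKey (by positivity : (0:ℝ) ≤ q1 * δ)
      have h7 : q1 * δ * (q2 / (q1 * δ) * L ^ (2 / q2)) = q2 * L ^ (2 / q2) := by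
        field_simp
      rw [h7] at h6
      nlinarith [h6]
    calc L / q1 * t ^ q1 = a * b := hab.symm
      _ ≤ a ^ (2/q1) / (2/q1) + b ^ (2/q2) / (2/q2) := hyoung
      _ ≤ Lδ / 2 * t ^ 2 + δ / 2 := by rw [haQ]; exact add_le_add_right hbQ _


/-- Approximate cocoercivity for convex `(L,p)`-Hölder smooth functions: if
`L_δ > 0` with `L_δ ≥ ((1−p)/((1+p)δ))^{(1−p)/(1+p)} · L^{2/(1+p)}` (the first factor being `1`
when `p = 1`, as `Real.rpow` gives `0^0 = 1`), then
`f(y) ≥ f(x) + ⟨∇f(x), y − x⟩ + (1/(2L_δ))‖∇f(x) − ∇f(y)‖² − δ/2` for all `x, y`. -/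
theorem stmt3 {n : ℕ} (L p δ Lδ : ℝ) (hL : 0 ≤ L) (hp0 : 0 ≤ p) (hp1 : p ≤ 1) (hδ : 0 < δ)
    (hLδpos : 0 < Lδ)
    (hLδ : ((1 - p) / ((1 + p) * δ)) ^ ((1 - p) / (1 + p)) * L ^ (2 / (1 + p)) ≤ Lδ)
    (f : EuclideanSpace ℝ (Fin n) → ℝ)
    (f' : EuclideanSpace ℝ (Fin n) → EuclideanSpace ℝ (Fin n))
    (hconv : ConvexOn ℝ Set.univ f)
    (hdiff : ∀ x, HasGradientAt f (f' x) x)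
    (hHolder : ∀ x y, ‖f' x - f' y‖ ≤ L * ‖x - y‖ ^ p) :
    ∀ x y, f x + ⟪f' x, y - x⟫ + 1 / (2 * Lδ) * ‖f' x - f' y‖ ^ 2 - δ / 2 ≤ f y := by
  intro x y
  set w := f' x - f' y with hw
  set z := y + Lδ⁻¹ • w with hz
  have hA := convex_lb hconv hdiff x z
  have hB : f z ≤ f y + ⟪f' y, z - y⟫ + Lδ / 2 * ‖z - y‖ ^ 2 + δ / 2 := by
    have hd := descent_lemma hL hp0 hp1 hdiff hHolder y z
    have hs := scalarC hL hp0 hp1 hδ hLδpos hLδ ‖z - y‖ (norm_nonneg _)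
    linarith
  have e1 : z - y = Lδ⁻¹ • w := by rw [hz]; abel
  have e2 : ‖z - y‖ ^ 2 = Lδ⁻¹ ^ 2 * ‖w‖ ^ 2 := by
    rw [e1, norm_smul, Real.norm_eq_abs, abs_of_pos (inv_pos.2 hLδpos), mul_pow]
  have e3 : ⟪f' y, z - y⟫ = Lδ⁻¹ * ⟪f' y, w⟫ := by rw [e1, real_inner_smul_right]
  have e4 : ⟪f' x, z - x⟫ = ⟪f' x, y - x⟫ + Lδ⁻¹ * ⟪f' x, w⟫ := by
    have hzx : z - x = (y - x) + Lδ⁻¹ • w := by rw [hz]; abel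
    rw [hzx, inner_add_right, real_inner_smul_right]
  have e5 : ⟪f' x, w⟫ - ⟪f' y, w⟫ = ‖w‖ ^ 2 := by
    rw [← inner_sub_left, ← hw, real_inner_self_eq_norm_sq]
  have e5' : Lδ⁻¹ * (⟪f' x, w⟫ - ⟪f' y, w⟫) = Lδ⁻¹ * ‖w‖ ^ 2 := by rw [e5]
  have hne : Lδ ≠ 0 := ne_of_gt hLδpos
  have e6 : 1 / (2 * Lδ) * ‖w‖ ^ 2 = Lδ⁻¹ * ‖w‖ ^ 2 / 2 := by
    rw [one_div, mul_inv, inv_mul_eq_div, div_mul_eq_mul_div, mul_comm (Lδ⁻¹) (‖w‖^2), mul_div_assoc]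
  have e7 : Lδ / 2 * (Lδ⁻¹ ^ 2 * ‖w‖ ^ 2) = Lδ⁻¹ * ‖w‖ ^ 2 / 2 := by
    field_simp
  rw [e2, e3] at hB
  rw [e4] at hA
  nlinarith [hA, hB, e5', e6, e7]
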